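/- Let d ≥ 2, let (β, B, γ) be an admissible simplex parameter set with γ_{ij} > 0 for all i ≠ j, and let b(x) = β + Bx be the associated affine drift. Let J be the set of indices j ∈ {1,…,d} such that b_j(x) = 0 for every x ∈ Δ^d with x_j = 0, and set E = {x ∈ Δ^d : x_j > 0 for all j ∉ J}. Then for every x ∈ E there exists a vector λ ∈ ℝ^{d−1} such that b̃(x) = c̃(x) λ, where b̃(x) ∈ ℝ^{d−1} is b(x) with the d-th entry deleted and c̃(x) is c(x) with the d-th row and column deleted; i.e., b̃(x) lies in the column space of c̃(x) for every x ∈ E. -/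

import Mathlib

open Matrix Finset

section helpers
open RealInnerProductSpace

private lemma symm_dotProduct_range {n : ℕ} (M : Matrix (Fin n) (Fin n) ℝ) (hM : Mᵀ = M)
    (w : Fin n → ℝ) (h : ∀ v : Fin n → ℝ, M *ᵥ v = 0 → w ⬝ᵥ v = 0) :
    ∃ l : Fin n → ℝ, w = M *ᵥ l := by
  classical
  have hMij : ∀ i j, M j i = M i j := fun i j => congrFun (congrFun hM i) j
  have hsymdp : ∀ a b : Fin n → ℝ, (M *ᵥ a) ⬝ᵥ b = a ⬝ᵥ (M *ᵥ b) := by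
    intro a b
    simp only [dotProduct, Matrix.mulVec, Finset.sum_mul, Finset.mul_sum]
    rw [Finset.sum_comm]
    refine Finset.sum_congr rfl fun i _ => Finset.sum_congr rfl fun j _ => ?_
    rw [hMij j i]; ring
  let T : EuclideanSpace ℝ (Fin n) →ₗ[ℝ] EuclideanSpace ℝ (Fin n) :=
    { toFun := fun v => WithLp.toLp 2 (M *ᵥ v)
      map_add' := fun a b => by simp [Matrix.mulVec_add]
      map_smul' := fun r a => by simp [Matrix.mulVec_smul] }
  let S := LinearMap.range T
  have inner_eq : ∀ a b : EuclideanSpace ℝ (Fin n), ⟪a, b⟫ = a ⬝ᵥ b := by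
    intro a b
    simp [PiLp.inner_apply, RCLike.inner_apply, dotProduct, mul_comm]
  obtain ⟨y, hy, z, hz, hw⟩ := S.exists_add_mem_mem_orthogonal (WithLp.toLp 2 w : EuclideanSpace ℝ (Fin n))
  have hTz : T z = 0 := by
    have h2 : ⟪T (T z), z⟫ = 0 := (Submodule.mem_orthogonal S z).mp hz _ (LinearMap.mem_range_self T _)
    have h1 : ⟪T z, T z⟫ = 0 := by
      rw [inner_eq] at h2 ⊢
      have h3 : (M *ᵥ (M *ᵥ z)) ⬝ᵥ z = 0 := h2
      rw [hsymdp (M *ᵥ z) z] at h3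
      exact h3
    exact inner_self_eq_zero.mp h1
  have hz0 : w ⬝ᵥ z = 0 := h z (congrArg WithLp.ofLp hTz)
  have hyz : ⟪y, z⟫ = 0 := (Submodule.mem_orthogonal S z).mp hz y hy
  have hzz : z ⬝ᵥ z = 0 := by
    have hw' : (w : Fin n → ℝ) = (y : Fin n → ℝ) + z := congrArg WithLp.ofLp hw
    rw [hw', add_dotProduct] at hz0
    rw [inner_eq] at hyz
    linarith
  have hz2 : z = 0 := by
    have : ⟪z, z⟫ = 0 := by rw [inner_eq]; exact hzz
    exact inner_self_eq_zero.mp this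
  obtain ⟨l, hl⟩ := hy
  refine ⟨l, ?_⟩
  have hwy : (w : Fin n → ℝ) = y := by have := congrArg WithLp.ofLp hw; rw [hz2, add_zero] at this; exact this
  rw [hwy, ← hl]
  rfl

private lemma sum_castLE_aux {d : ℕ} (F : Fin d → ℝ)
    (hF : ∀ i : Fin d, ¬ ((i : ℕ) < d - 1) → F i = 0) :
    ∑ i, F i = ∑ k : Fin (d - 1), F (Fin.castLE (Nat.sub_le d 1) k) := by
  classical
  have hmap := Finset.sum_map Finset.univ ⟨Fin.castLE (Nat.sub_le d 1), Fin.castLE_injective _⟩ F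
  simp only [Function.Embedding.coeFn_mk] at hmap
  rw [← hmap]
  refine (Finset.sum_subset (Finset.subset_univ _) fun i _ hi => hF i fun hlt => hi ?_).symm
  simp only [Finset.mem_map, Finset.mem_univ, Function.Embedding.coeFn_mk, true_and]
  exact ⟨⟨(i : ℕ), hlt⟩, by ext; simp⟩

end helpers

/-- for an admissible simplex parameter set `(β, B, γ)` with strictly positive
off-diagonal `γ`, the truncated drift `b̃(x)` lies in the column space of the truncated
diffusion matrix `c̃(x)` for every `x` in the set `E` (where the coordinates whose drift
does not vanish on the corresponding boundary face are strictly positive). -/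
theorem statement10 (d : ℕ) (hd : 2 ≤ d)
    (β : Fin d → ℝ) (B : Matrix (Fin d) (Fin d) ℝ) (γ : Fin d → Fin d → ℝ)
    (hγsymm : ∀ i j, γ i j = γ j i) (hγdiag : ∀ i, γ i i = 0)
    (hγpos : ∀ i j, i ≠ j → 0 < γ i j)
    (hB1 : ∀ j, (∑ i, B i j) + (∑ i, β i) = 0)
    (hβB : ∀ i j, i ≠ j → 0 ≤ β i + B i j)
    (b : (Fin d → ℝ) → Fin d → ℝ)
    (hb : ∀ x i, b x i = β i + ∑ j, B i j * x j)
    (c : (Fin d → ℝ) → Matrix (Fin d) (Fin d) ℝ)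
    (hc : ∀ x i j, c x i j =
      if i = j then ∑ k ∈ Finset.univ.erase i, γ i k * x i * x k
      else -(γ i j * x i * x j))
    (J : Set (Fin d))
    (hJ : J = {j | ∀ x ∈ stdSimplex ℝ (Fin d), x j = 0 → b x j = 0})
    (E : Set (Fin d → ℝ))
    (hE : E = {x | x ∈ stdSimplex ℝ (Fin d) ∧ ∀ j ∉ J, 0 < x j}) :
    ∀ x ∈ E, ∃ lam : Fin (d - 1) → ℝ,
      (fun k => b x (Fin.castLE (Nat.sub_le d 1) k)) =
        ((c x).submatrix (Fin.castLE (Nat.sub_le d 1)) (Fin.castLE (Nat.sub_le d 1))) *ᵥ lam := by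
  classical
  intro x hx
  rw [hE] at hx
  obtain ⟨hxs, hxE⟩ := hx
  have hx0 : ∀ i, 0 ≤ x i := hxs.1
  have hx1 : ∑ i, x i = 1 := hxs.2
  set f : Fin (d - 1) → Fin d := Fin.castLE (Nat.sub_le d 1) with hf
  have hbzero : ∀ i, x i = 0 → b x i = 0 := by
    intro i hxi
    have hiJ : i ∈ J := by
      by_contra hiJ
      exact absurd hxi (hxE i hiJ).ne'
    rw [hJ] at hiJ
    exact hiJ x hxs hxi
  have hsumb : ∑ i, b x i = 0 := by
    simp only [hb]
    rw [Finset.sum_add_distrib, Finset.sum_comm]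
    have hcol : ∀ j : Fin d, ∑ i, B i j * x j = (-(∑ i, β i)) * x j := by
      intro j
      rw [← Finset.sum_mul]
      have := hB1 j
      have : ∑ i, B i j = -(∑ i, β i) := by linarith
      rw [this]
    rw [Finset.sum_congr rfl fun j _ => hcol j, ← Finset.mul_sum, hx1]
    ring
  apply symm_dotProduct_range
  · ext k l
    simp only [Matrix.transpose_apply, Matrix.submatrix_apply]
    rcases eq_or_ne (f k) (f l) with h | h
    · rw [h]
    · rw [hc, hc, if_neg (Ne.symm h), if_neg h, hγsymm (f l) (f k)]
      ring
  · intro v hv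
    set u : Fin d → ℝ := fun i => if h : (i : ℕ) < d - 1 then v ⟨i, h⟩ else 0 with hu
    have hufk : ∀ k : Fin (d - 1), u (f k) = v k := by
      intro k
      simp only [hu]
      rw [dif_pos (show ((f k : Fin d) : ℕ) < d - 1 from k.isLt)]
      exact congrArg v (Fin.ext rfl)
    have huz : ∀ i : Fin d, ¬ ((i : ℕ) < d - 1) → u i = 0 := fun i h => dif_neg h
    have hv' : ∀ k : Fin (d - 1), ∑ k', ((c x).submatrix f f) k k' * v k' = 0 := by
      intro k
      have := congrFun hv k
      simpa [Matrix.mulVec, dotProduct] using this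
    have hrow : ∀ k : Fin (d - 1), ∑ j, c x (f k) j * u j = 0 := by
      intro k
      rw [sum_castLE_aux (fun j => c x (f k) j * u j) (fun j hj => by show c x (f k) j * u j = 0; rw [huz j hj, mul_zero])]
      rw [Finset.sum_congr rfl fun k' _ => by rw [hufk k']]
      exact hv' k
    have hrowfull : ∀ i : Fin d,
        ∑ j, c x i j * u j = ∑ j, γ i j * x i * x j * (u i - u j) := by
      intro i
      have hL : ∑ j, c x i j * u j =
          (∑ j ∈ Finset.univ.erase i, -(γ i j * x i * x j) * u j)
            + (∑ k ∈ Finset.univ.erase i, γ i k * x i * x k) * u i := by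
        rw [← Finset.sum_erase_add Finset.univ _ (Finset.mem_univ i)]
        congr 1
        · refine Finset.sum_congr rfl fun j hj => ?_
          rw [hc, if_neg (Finset.ne_of_mem_erase hj).symm]
        · rw [hc, if_pos rfl]
      have hR : ∑ j, γ i j * x i * x j * (u i - u j) =
          ∑ j ∈ Finset.univ.erase i, γ i j * x i * x j * (u i - u j) := by
        rw [← Finset.sum_erase_add Finset.univ
          (fun j => γ i j * x i * x j * (u i - u j)) (Finset.mem_univ i)]
        rw [hγdiag i]
        ring
      rw [hL, hR, Finset.sum_mul, ← Finset.sum_add_distrib]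
      exact Finset.sum_congr rfl fun j _ => by ring
    have hdot : ∑ i, ∑ j, γ i j * x i * x j * (u i - u j) * u i = 0 := by
      have hterm : ∀ i : Fin d,
          ∑ j, γ i j * x i * x j * (u i - u j) * u i = u i * ∑ j, c x i j * u j := by
        intro i
        rw [hrowfull i, Finset.mul_sum]
        exact Finset.sum_congr rfl fun j _ => by ring
      rw [Finset.sum_congr rfl fun i _ => hterm i]
      apply Finset.sum_eq_zero
      intro i _
      by_cases hi : (i : ℕ) < d - 1
      · have hfi : f ⟨(i : ℕ), hi⟩ = i := Fin.ext rfl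
        rw [← hfi, hrow ⟨(i : ℕ), hi⟩, mul_zero]
      · rw [huz i hi, zero_mul]
    have hQ : ∑ i, ∑ j, γ i j * x i * x j * (u i - u j) ^ 2 = 0 := by
      have hswap : ∑ i, ∑ j, γ i j * x i * x j * (u j - u i) * u j
          = ∑ i, ∑ j, γ i j * x i * x j * (u i - u j) * u i := by
        rw [Finset.sum_comm]
        exact Finset.sum_congr rfl fun i _ => Finset.sum_congr rfl fun j _ => by
          rw [hγsymm j i]; ring
      calc ∑ i, ∑ j, γ i j * x i * x j * (u i - u j) ^ 2
          = ∑ i, ∑ j, (γ i j * x i * x j * (u i - u j) * u i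
              + γ i j * x i * x j * (u j - u i) * u j) :=
            Finset.sum_congr rfl fun i _ => Finset.sum_congr rfl fun j _ => by ring
        _ = (∑ i, ∑ j, γ i j * x i * x j * (u i - u j) * u i)
              + ∑ i, ∑ j, γ i j * x i * x j * (u j - u i) * u j := by
            rw [← Finset.sum_add_distrib]
            exact Finset.sum_congr rfl fun i _ => Finset.sum_add_distrib
        _ = 0 := by rw [hswap, hdot]; ring
    have hnn : ∀ i j : Fin d, 0 ≤ γ i j * x i * x j * (u i - u j) ^ 2 := by
      intro i j
      rcases eq_or_ne i j with rfl | hne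
      · rw [hγdiag i]; simp
      · exact mul_nonneg (mul_nonneg (mul_nonneg (hγpos i j hne).le (hx0 i)) (hx0 j))
          (sq_nonneg _)
    have hQ0 : ∀ i j : Fin d, γ i j * x i * x j * (u i - u j) ^ 2 = 0 := by
      intro i j
      have h1 := (Finset.sum_eq_zero_iff_of_nonneg
        (fun i _ => Finset.sum_nonneg fun j _ => hnn i j)).mp hQ i (Finset.mem_univ i)
      exact (Finset.sum_eq_zero_iff_of_nonneg (fun j _ => hnn i j)).mp h1 j (Finset.mem_univ j)
    have hconst : ∀ i j : Fin d, 0 < x i → 0 < x j → u i = u j := by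
      intro i j hi hj
      rcases eq_or_ne i j with rfl | hne
      · rfl
      have hG : 0 < γ i j * x i * x j := mul_pos (mul_pos (hγpos i j hne) hi) hj
      have h2 : (u i - u j) ^ 2 = 0 :=
        (mul_eq_zero.mp (hQ0 i j)).resolve_left (ne_of_gt hG)
      have h3 : u i - u j = 0 := sq_eq_zero_iff.mp h2
      linarith
    obtain ⟨i0, hi0⟩ : ∃ i, 0 < x i := by
      by_contra hcon
      push_neg at hcon
      have : ∑ i, x i = 0 := Finset.sum_eq_zero fun i _ => le_antisymm (hcon i) (hx0 i)
      rw [hx1] at this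
      norm_num at this
    show (fun k => b x (f k)) ⬝ᵥ v = 0
    calc (fun k => b x (f k)) ⬝ᵥ v = ∑ k, b x (f k) * v k := rfl
      _ = ∑ k, b x (f k) * u (f k) := Finset.sum_congr rfl fun k _ => by rw [hufk]
      _ = ∑ i, b x i * u i :=
          (sum_castLE_aux (fun i => b x i * u i) fun i h => by show b x i * u i = 0; rw [huz i h, mul_zero]).symm
      _ = ∑ i, b x i * u i0 := by
          refine Finset.sum_congr rfl fun i _ => ?_
          rcases (hx0 i).lt_or_eq with hpos | h0
          · rw [hconst i i0 hpos hi0]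
          · rw [hbzero i h0.symm]; ring
      _ = (∑ i, b x i) * u i0 := (Finset.sum_mul _ _ _).symm
      _ = 0 := by rw [hsumb]; ring
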